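/- arXiv:1705.02756 — 4 statements merged into one kernel-verified Lean document; each statement's English description precedes it below -/
import Mathlib

section
/- For all real numbers a and b with |b| ≥ |a|, ∫₀^{2π} exp(a·cos θ + i·b·sin θ) dθ = 2π · Σ_{m=0}^∞ ((−1)^m / (m!)²) · ((b² − a²)/4)^m, i.e. the integral equals 2π·J₀(√(b² − a²)) where J₀ is the Bessel function of order zero given by its power series. -/
open MeasureTheory Filter Topology

namespace CircleBessel

noncomputable def W (u v : ℂ) (θ : ℝ) : ℂ :=
  u * Complex.exp (θ * Complex.I) + v * Complex.exp (-θ * Complex.I)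

lemma contW (u v : ℂ) : Continuous (W u v) := by
  unfold W
  fun_prop

lemma normW_le (u v : ℂ) (θ : ℝ) : ‖W u v θ‖ ≤ ‖u‖ + ‖v‖ := by
  unfold W
  refine (norm_add_le _ _).trans ?_
  have h1 : ‖Complex.exp (θ * Complex.I)‖ = 1 :=
    Complex.norm_exp_ofReal_mul_I θ
  have h2 : ‖Complex.exp (-θ * Complex.I)‖ = 1 := by
    have := Complex.norm_exp_ofReal_mul_I (-θ)
    simpa using this
  simp only [norm_mul, h1, h2, mul_one, le_refl]

lemma integral_exp_int (c : ℤ) :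
    (∫ θ in (0:ℝ)..(2*Real.pi), Complex.exp ((c:ℂ) * θ * Complex.I)) =
      if c = 0 then (2*Real.pi : ℂ) else 0 := by
  rcases eq_or_ne c 0 with h | h
  · simp [h]
  · rw [if_neg h]
    have hc : (c:ℂ) * Complex.I ≠ 0 :=
      mul_ne_zero (Int.cast_ne_zero.mpr h) Complex.I_ne_zero
    have key := integral_exp_mul_complex (a := (0:ℝ)) (b := 2*Real.pi) hc
    have : (∫ θ in (0:ℝ)..(2*Real.pi), Complex.exp ((c:ℂ) * θ * Complex.I))
        = ∫ θ in (0:ℝ)..(2*Real.pi), Complex.exp (((c:ℂ) * Complex.I) * θ) := by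
      congr 1; ext θ; ring_nf
    rw [this, key]
    have h1 : (c:ℂ) * Complex.I * (2*Real.pi : ℝ) = (c:ℤ) * (2 * Real.pi * Complex.I) := by
      push_cast; ring
    rw [h1, Complex.exp_int_mul_two_pi_mul_I]
    simp

lemma integral_pow_sum (u v : ℂ) (n : ℕ) :
    (∫ θ in (0:ℝ)..(2*Real.pi), (W u v θ)^n)
    = ∑ k ∈ Finset.range (n+1),
        (if 2*k = n then (2*Real.pi : ℂ) * (u^k * v^(n-k) * (n.choose k)) else 0) := by
  have hpt : ∀ θ : ℝ, (W u v θ)^n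
      = ∑ k ∈ Finset.range (n+1),
          (u^k * v^(n-k) * (n.choose k)) *
            Complex.exp (((((k:ℤ) - ((n-k:ℕ):ℤ) : ℤ)):ℂ) * θ * Complex.I) := by
    intro θ
    rw [W, add_pow]
    refine Finset.sum_congr rfl fun k hk => ?_
    rw [mul_pow, mul_pow, ← Complex.exp_nat_mul, ← Complex.exp_nat_mul]
    rw [mul_mul_mul_comm, ← Complex.exp_add]
    have harg : (k:ℂ) * (↑θ * Complex.I) + (↑(n-k) : ℂ) * (-↑θ * Complex.I)
        = ((((k:ℤ) - ((n-k:ℕ):ℤ) : ℤ)):ℂ) * θ * Complex.I := by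
      push_cast
      ring
    rw [harg]
    ring
  simp_rw [hpt]
  rw [intervalIntegral.integral_finset_sum]
  · refine Finset.sum_congr rfl fun k hk => ?_
    rw [intervalIntegral.integral_const_mul, integral_exp_int]
    have hk' : k ≤ n := Nat.lt_succ_iff.mp (Finset.mem_range.mp hk)
    by_cases h2 : 2*k = n
    · rw [if_pos (show ((k:ℤ) - ((n-k:ℕ):ℤ) : ℤ) = 0 by omega), if_pos h2]
      ring
    · rw [if_neg (show ¬((k:ℤ) - ((n-k:ℕ):ℤ) : ℤ) = 0 by omega), if_neg h2]
      ring
  · intro k hk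
    apply Continuous.intervalIntegrable
    fun_prop

lemma integral_pow_even (u v : ℂ) (m : ℕ) :
    (∫ θ in (0:ℝ)..(2*Real.pi), (W u v θ)^(2*m))
    = (2*Real.pi : ℂ) * (u*v)^m * ((2*m).choose m) := by
  rw [integral_pow_sum]
  have : ∀ k ∈ Finset.range (2*m+1),
      (if 2*k = 2*m then (2*Real.pi : ℂ) * (u^k * v^(2*m-k) * ((2*m).choose k)) else 0)
      = (if k = m then (2*Real.pi : ℂ) * (u^k * v^(2*m-k) * ((2*m).choose k)) else 0) := by
    intro k _
    congr 1
    simp only [eq_iff_iff]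
    omega
  rw [Finset.sum_congr rfl this, Finset.sum_ite_eq' (Finset.range (2*m+1)) m]
  rw [if_pos (Finset.mem_range.mpr (by omega))]
  have : 2*m - m = m := by omega
  rw [this, mul_pow]
  ring

lemma integral_pow_odd (u v : ℂ) (m : ℕ) :
    (∫ θ in (0:ℝ)..(2*Real.pi), (W u v θ)^(2*m+1)) = 0 := by
  rw [integral_pow_sum]
  refine Finset.sum_eq_zero fun k _ => ?_
  rw [if_neg (by omega)]

lemma summable_aux (u v : ℂ) :
    Summable (fun m : ℕ => (u*v)^m / ((m.factorial : ℂ))^2) := by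
  refine Summable.of_norm_bounded (Real.summable_pow_div_factorial ‖u*v‖) fun m => ?_
  have h1 : (1:ℝ) ≤ (m.factorial : ℝ) :=
    Nat.one_le_cast.mpr m.factorial_pos
  calc ‖(u*v)^m / ((m.factorial : ℂ))^2‖ = ‖u*v‖^m / ((m.factorial : ℝ))^2 := by
        rw [norm_div, norm_pow, norm_pow, Complex.norm_natCast]
    _ ≤ ‖u*v‖^m / (m.factorial : ℝ) := by
        apply div_le_div_of_nonneg_left (pow_nonneg (norm_nonneg _) m) (by positivity)
        nlinarith

lemma choose_div_factorial (m : ℕ) :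
    (((2*m).choose m : ℂ)) / ((2*m).factorial : ℂ) = 1 / ((m.factorial : ℂ))^2 := by
  have key : (2*m).choose m * m.factorial * (2*m - m).factorial = (2*m).factorial :=
    Nat.choose_mul_factorial_mul_factorial (by omega)
  have h2 : 2*m - m = m := by omega
  rw [h2] at key
  have hf : ((m.factorial : ℂ)) ≠ 0 := Nat.cast_ne_zero.mpr m.factorial_ne_zero
  have hf2 : (((2*m).factorial : ℂ)) ≠ 0 := Nat.cast_ne_zero.mpr (2*m).factorial_ne_zero
  field_simp
  rw [pow_two, ← mul_assoc]
  exact_mod_cast key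

lemma key_integral (u v : ℂ) :
    (∫ θ in (0:ℝ)..(2*Real.pi), Complex.exp (W u v θ))
    = 2 * Real.pi * ∑' m : ℕ, (u*v)^m / ((m.factorial : ℂ))^2 := by
  have hpi : (0:ℝ) ≤ 2*Real.pi := by positivity
  set R : ℝ := ‖u‖ + ‖v‖ with hR
  have hexp : ∀ θ : ℝ, Complex.exp (W u v θ) = ∑' n : ℕ, (W u v θ)^n / (n.factorial : ℂ) := by
    intro θ
    rw [Complex.exp_eq_exp_ℂ, NormedSpace.exp_eq_tsum_div]
  have hFc : ∀ n : ℕ, Continuous (fun θ : ℝ => (W u v θ)^n / (n.factorial : ℂ)) := by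
    intro n
    exact ((contW u v).pow n).div_const _
  have hFint : ∀ n : ℕ,
      IntegrableOn (fun θ : ℝ => (W u v θ)^n / (n.factorial : ℂ)) (Set.Ioc 0 (2*Real.pi)) := by
    intro n
    exact (hFc n).integrableOn_Ioc
  have hnorm : ∀ n : ℕ, ∀ θ : ℝ, ‖(W u v θ)^n / (n.factorial : ℂ)‖ ≤ R^n / n.factorial := by
    intro n θ
    rw [norm_div, norm_pow, Complex.norm_natCast]
    exact (div_le_div_iff_of_pos_right (by exact_mod_cast n.factorial_pos)).mpr
      (pow_le_pow_left₀ (norm_nonneg _) (normW_le u v θ) n)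
  have hsum : Summable (fun n : ℕ =>
      ∫ θ in Set.Ioc (0:ℝ) (2*Real.pi), ‖(W u v θ)^n / (n.factorial : ℂ)‖) := by
    apply Summable.of_nonneg_of_le
      (fun n => integral_nonneg fun θ => norm_nonneg _)
      (fun n => ?_)
      (((Real.summable_pow_div_factorial R).mul_left (2*Real.pi)))
    have hb : ∫ θ in Set.Ioc (0:ℝ) (2*Real.pi), ‖(W u v θ)^n / (n.factorial : ℂ)‖
        ≤ ∫ _θ in Set.Ioc (0:ℝ) (2*Real.pi), (R^n / n.factorial : ℝ) := by
      apply setIntegral_mono_on ((hFint n).norm) ((integrableOn_const_iff).mpr (Or.inr (by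
        rw [Real.volume_Ioc]; exact ENNReal.ofReal_lt_top))) measurableSet_Ioc
      intro θ _
      exact hnorm n θ
    refine hb.trans ?_
    rw [setIntegral_const, Real.volume_real_Ioc_of_le hpi, smul_eq_mul, sub_zero]
  have hswap : (∑' n : ℕ, ∫ θ in Set.Ioc (0:ℝ) (2*Real.pi), (W u v θ)^n / (n.factorial : ℂ))
      = ∫ θ in Set.Ioc (0:ℝ) (2*Real.pi), ∑' n : ℕ, (W u v θ)^n / (n.factorial : ℂ) :=
    integral_tsum_of_summable_integral_norm hFint hsum
  have hI : (∫ θ in (0:ℝ)..(2*Real.pi), Complex.exp (W u v θ))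
      = ∫ θ in Set.Ioc (0:ℝ) (2*Real.pi), Complex.exp (W u v θ) :=
    intervalIntegral.integral_of_le hpi
  rw [hI]
  have : (∫ θ in Set.Ioc (0:ℝ) (2*Real.pi), Complex.exp (W u v θ))
      = ∫ θ in Set.Ioc (0:ℝ) (2*Real.pi), ∑' n : ℕ, (W u v θ)^n / (n.factorial : ℂ) := by
    congr 1; ext θ; exact hexp θ
  rw [this, ← hswap]
  -- now compute each term
  set g : ℕ → ℂ := fun n => ∫ θ in Set.Ioc (0:ℝ) (2*Real.pi), (W u v θ)^n / (n.factorial : ℂ)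
    with hg
  have hgi : ∀ n : ℕ, g n = (∫ θ in (0:ℝ)..(2*Real.pi), (W u v θ)^n) / (n.factorial : ℂ) := by
    intro n
    rw [hg]
    simp only
    rw [intervalIntegral.integral_of_le hpi, ← integral_div]
  have hge : ∀ m : ℕ, g (2*m) = 2*Real.pi * ((u*v)^m / ((m.factorial : ℂ))^2) := by
    intro m
    rw [hgi, integral_pow_even]
    have h := choose_div_factorial m
    have expand : ((2*Real.pi:ℂ) * (u*v)^m * (((2*m).choose m : ℕ) : ℂ)) / (((2*m).factorial : ℕ) : ℂ)
        = (2*Real.pi:ℂ) * (u*v)^m * ((((2*m).choose m : ℕ) : ℂ) / (((2*m).factorial : ℕ) : ℂ)) := by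
      ring
    rw [expand, h]
    ring
  have hgo : ∀ m : ℕ, g (2*m+1) = 0 := by
    intro m
    rw [hgi, integral_pow_odd]
    simp
  have hse : Summable (fun m : ℕ => g (2*m)) := by
    simp_rw [hge]
    exact (summable_aux u v).mul_left _
  have hso : Summable (fun m : ℕ => g (2*m+1)) := by
    simp_rw [hgo]
    exact summable_zero
  have := tsum_even_add_odd hse hso
  rw [← this]
  simp_rw [hgo, tsum_zero, add_zero, hge]
  rw [tsum_mul_left]

end CircleBessel

/-- For `|b| ≥ |a|`,
`∫₀^{2π} exp(a cos θ + i b sin θ) dθ = 2π Σ_{m=0}^∞ ((−1)^m/(m!)²) ((b² − a²)/4)^m`,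
i.e. it equals `2π J₀(√(b² − a²))` with `J₀` given by its power series. -/
theorem circle_integral_bessel (a b : ℝ) (hab : |a| ≤ |b|) :
    (∫ θ in (0:ℝ)..(2 * Real.pi),
        Complex.exp (↑(a * Real.cos θ) + Complex.I * ↑(b * Real.sin θ)))
      = 2 * Real.pi *
          ∑' m : ℕ, ((-1) ^ m / ((m.factorial : ℂ)) ^ 2) *
            (((b ^ 2 - a ^ 2) / 4 : ℝ) : ℂ) ^ m := by
  set u : ℂ := ((a:ℂ) + b) / 2 with hu
  set v : ℂ := ((a:ℂ) - b) / 2 with hv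
  have hpt : ∀ θ : ℝ, (↑(a * Real.cos θ) + Complex.I * ↑(b * Real.sin θ) : ℂ)
      = CircleBessel.W u v θ := by
    intro θ
    rw [CircleBessel.W, Complex.exp_mul_I]
    have : Complex.exp (-↑θ * Complex.I) = Complex.cos θ - Complex.sin θ * Complex.I := by
      have h := Complex.exp_mul_I (-θ : ℂ)
      rw [Complex.cos_neg, Complex.sin_neg] at h
      rw [h]; ring
    rw [this, hu, hv]
    rw [Complex.ofReal_mul, Complex.ofReal_mul, Complex.ofReal_cos, Complex.ofReal_sin]
    ring
  have hint : (∫ θ in (0:ℝ)..(2 * Real.pi),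
        Complex.exp (↑(a * Real.cos θ) + Complex.I * ↑(b * Real.sin θ)))
      = ∫ θ in (0:ℝ)..(2 * Real.pi), Complex.exp (CircleBessel.W u v θ) := by
    congr 1; ext θ; rw [hpt θ]
  rw [hint, CircleBessel.key_integral]
  congr 1
  apply tsum_congr
  intro m
  have huv : u * v = -(((b ^ 2 - a ^ 2) / 4 : ℝ) : ℂ) := by
    rw [hu, hv]
    push_cast
    ring
  rw [huv, neg_pow]
  ring
end

section
/- The Laurent expansion at z = 0 of the function z ↦ exp{ c [ (τ/2)(z + 1/z) + (√(τ²+k²)/2)(z − 1/z) ] } / z, where c > 0, τ > 0, k ≥ 0, has residue (coefficient of z^{−1}·z⁰ term, i.e. the constant Laurent coefficient of the exponential factor) equal to Σ_{m=0}^∞ ((−1)^m/(m!)²) (k²c²/4)^m = J₀(kc); equivalently, (1/(2πi)) ∮_{|z|=1} exp{ c [ (τ/2)(z + 1/z) + (√(τ²+k²)/2)(z − 1/z) ] } dz/z = J₀(kc). -/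
open MeasureTheory Filter Topology

lemma tsum_expand (a b z : ℂ) (hz : z ≠ 0) :
    Complex.exp (a * z + b / z) / z
      = ∑' p : ℕ × ℕ, (a ^ p.1 * b ^ p.2 / ((p.1.factorial : ℂ) * (p.2.factorial : ℂ)))
          * z ^ ((p.1 : ℤ) - (p.2 : ℤ) - 1) := by
  have hsum : ∀ w : ℂ, Summable fun n : ℕ => ‖w ^ n / (n.factorial : ℂ)‖ := by
    intro w
    simpa [norm_div, norm_pow] using Real.summable_pow_div_factorial ‖w‖
  have hexp : ∀ w : ℂ, Complex.exp w = ∑' n : ℕ, w ^ n / (n.factorial : ℂ) := by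
    intro w
    rw [Complex.exp_eq_exp_ℂ, NormedSpace.exp_eq_tsum_div]
  rw [Complex.exp_add, hexp, hexp, tsum_mul_tsum_of_summable_norm (hsum _) (hsum _),
    ← tsum_div_const]
  refine tsum_congr fun p => ?_
  rw [zpow_sub₀ hz, zpow_sub₀ hz, zpow_natCast, zpow_natCast, zpow_one]
  have h1 : (p.1.factorial : ℂ) ≠ 0 := Nat.cast_ne_zero.2 p.1.factorial_ne_zero
  have h2 : (p.2.factorial : ℂ) ≠ 0 := Nat.cast_ne_zero.2 p.2.factorial_ne_zero
  rw [mul_pow, div_pow]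
  field_simp [hz]

lemma circleIntegral_exp_eq (a b : ℂ) :
    (∮ z in C(0, 1), Complex.exp (a * z + b / z) / z)
      = (2 * Real.pi * Complex.I) * ∑' n : ℕ, (a * b) ^ n / ((n.factorial : ℂ)) ^ 2 := by
  set cf : ℕ × ℕ → ℂ :=
    fun p => a ^ p.1 * b ^ p.2 / ((p.1.factorial : ℂ) * (p.2.factorial : ℂ)) with hcf
  have hsum : ∀ w : ℂ, Summable fun n : ℕ => ‖w ^ n / (n.factorial : ℂ)‖ := by
    intro w
    simpa [norm_div, norm_pow] using Real.summable_pow_div_factorial ‖w‖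
  have hcfsum : Summable fun p : ℕ × ℕ => ‖cf p‖ := by
    refine ((hsum a).mul_of_nonneg (hsum b) (fun n => norm_nonneg _)
      (fun n => norm_nonneg _)).congr fun p => ?_
    simp only [hcf, norm_div, norm_mul, norm_pow]
    field_simp
  have h2pi : (0:ℝ) ≤ 2 * Real.pi := by positivity
  have h1 : (∮ z in C(0, 1), Complex.exp (a * z + b / z) / z)
      = ∮ z in C(0, 1), ∑' p : ℕ × ℕ, cf p * z ^ ((p.1 : ℤ) - (p.2 : ℤ) - 1) := by
    refine circleIntegral.integral_congr zero_le_one fun z hz => ?_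
    have hz0 : z ≠ 0 := by
      intro h
      rw [Metric.mem_sphere, h] at hz
      norm_num at hz
    exact tsum_expand a b z hz0
  rw [h1]
  set F : ℕ × ℕ → ℝ → ℂ := fun p θ =>
    (circleMap 0 1 θ * Complex.I) *
      (cf p * (circleMap 0 1 θ) ^ ((p.1 : ℤ) - (p.2 : ℤ) - 1)) with hFdef
  have hmapne : ∀ θ : ℝ, circleMap 0 1 θ ≠ 0 := fun θ =>
    circleMap_ne_center one_ne_zero
  have hFnorm : ∀ p θ, ‖F p θ‖ = ‖cf p‖ := by
    intro p θ
    simp [hFdef, norm_mul, norm_zpow, norm_circleMap_zero]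
  have hcont : ∀ p : ℕ × ℕ, Continuous (F p) := by
    intro p
    exact ((continuous_circleMap 0 1).mul continuous_const).mul
      (continuous_const.mul ((continuous_circleMap 0 1).zpow₀ _
        fun θ => Or.inl (hmapne θ)))
  have hnormint : ∀ p : ℕ × ℕ,
      (∫ θ in Set.Ioc 0 (2 * Real.pi), ‖F p θ‖) = 2 * Real.pi * ‖cf p‖ := by
    intro p
    rw [setIntegral_congr_fun measurableSet_Ioc fun θ _ => hFnorm p θ,
      setIntegral_const]
    rw [Real.volume_real_Ioc_of_le (by linarith [Real.pi_pos])]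
    rw [smul_eq_mul]
    ring_nf
  have interchange :
      (∫ θ in Set.Ioc 0 (2 * Real.pi), ∑' p : ℕ × ℕ, F p θ)
        = ∑' p : ℕ × ℕ, ∫ θ in Set.Ioc 0 (2 * Real.pi), F p θ := by
    refine (MeasureTheory.integral_tsum_of_summable_integral_norm
      (fun p => (hcont p).integrableOn_Ioc) ?_).symm
    refine (hcfsum.mul_left (2 * Real.pi)).congr fun p => ?_
    exact (hnormint p).symm
  have hLHS : (∮ z in C(0, 1), ∑' p : ℕ × ℕ, cf p * z ^ ((p.1 : ℤ) - (p.2 : ℤ) - 1))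
      = ∫ θ in Set.Ioc 0 (2 * Real.pi), ∑' p : ℕ × ℕ, F p θ := by
    rw [circleIntegral, intervalIntegral.integral_of_le h2pi]
    refine setIntegral_congr_fun measurableSet_Ioc fun θ _ => ?_
    rw [deriv_circleMap, smul_eq_mul, ← tsum_mul_left]
  have hterm : ∀ p : ℕ × ℕ,
      (∫ θ in Set.Ioc 0 (2 * Real.pi), F p θ)
        = cf p * if ((p.1 : ℤ) - (p.2 : ℤ) - 1 = -1) then (2 * Real.pi * Complex.I) else 0 := by
    intro p
    have : (∫ θ in Set.Ioc 0 (2 * Real.pi), F p θ)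
        = ∮ z in C(0, 1), cf p * z ^ ((p.1 : ℤ) - (p.2 : ℤ) - 1) := by
      rw [circleIntegral, intervalIntegral.integral_of_le h2pi]
      refine setIntegral_congr_fun measurableSet_Ioc fun θ _ => ?_
      rw [deriv_circleMap, smul_eq_mul]
    rw [this, circleIntegral.integral_const_mul]
    congr 1
    split_ifs with h
    · rw [h]
      have := circleIntegral.integral_sub_inv_of_mem_ball
        (Metric.mem_ball_self (by norm_num : (0:ℝ) < 1)) (c := (0:ℂ))
      simpa [zpow_neg_one] using this
    · simpa using circleIntegral.integral_sub_zpow_of_ne h 0 0 1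
  rw [hLHS, interchange]
  have hdiag : (∑' p : ℕ × ℕ,
        cf p * if ((p.1 : ℤ) - (p.2 : ℤ) - 1 = -1) then (2 * Real.pi * Complex.I) else 0)
      = ∑' n : ℕ, cf (n, n) * (2 * Real.pi * Complex.I) := by
    rw [← Function.Injective.tsum_eq (g := fun n : ℕ => ((n, n) : ℕ × ℕ))
      (fun m n h => by simpa using congrArg Prod.fst h) ?_]
    · refine tsum_congr fun n => ?_
      simp
    · intro p hp
      rw [Function.mem_support] at hp
      have hpd : (p.1 : ℤ) - (p.2 : ℤ) - 1 = -1 := by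
        by_contra h
        simp [h] at hp
      have : p.1 = p.2 := by omega
      exact ⟨p.1, Prod.ext rfl this⟩
  calc (∑' p : ℕ × ℕ, ∫ θ in Set.Ioc 0 (2 * Real.pi), F p θ)
      = ∑' n : ℕ, cf (n, n) * (2 * Real.pi * Complex.I) := by
        rw [← hdiag]; exact tsum_congr hterm
    _ = (2 * Real.pi * Complex.I) * ∑' n : ℕ, (a * b) ^ n / ((n.factorial : ℂ)) ^ 2 := by
        rw [← tsum_mul_left]
        refine tsum_congr fun n => ?_
        simp only [hcf, mul_pow, sq]
        ring

/-- The residue at `z = 0` of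
`exp{c[(τ/2)(z + 1/z) + (√(τ²+k²)/2)(z − 1/z)]}/z` equals
`Σ_{m=0}^∞ ((−1)^m/(m!)²)(k²c²/4)^m = J₀(kc)`; equivalently
`(1/(2πi)) ∮_{|z|=1} exp{c[(τ/2)(z + 1/z) + (√(τ²+k²)/2)(z − 1/z)]} dz/z = J₀(kc)`. -/
theorem residue_bessel (c τ k : ℝ) (hc : 0 < c) (hτ : 0 < τ) (hk : 0 ≤ k) :
    (1 / (2 * Real.pi * Complex.I)) *
        (∮ z in C(0, 1),
          Complex.exp (↑c * (↑τ / 2 * (z + 1 / z) +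
            ↑(Real.sqrt (τ ^ 2 + k ^ 2)) / 2 * (z - 1 / z))) / z)
      = ∑' m : ℕ, ((-1) ^ m / ((m.factorial : ℂ)) ^ 2) * ((k ^ 2 * c ^ 2 / 4 : ℝ) : ℂ) ^ m := by
  have hs0 : (0:ℝ) ≤ τ ^ 2 + k ^ 2 := by positivity
  set s : ℝ := Real.sqrt (τ ^ 2 + k ^ 2) with hsdef
  set A : ℂ := (c : ℂ) * ((τ : ℂ) + (s : ℂ)) / 2 with hA
  set B : ℂ := (c : ℂ) * ((τ : ℂ) - (s : ℂ)) / 2 with hB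
  have hcong : (∮ z in C(0, 1),
        Complex.exp (↑c * (↑τ / 2 * (z + 1 / z) + (s : ℂ) / 2 * (z - 1 / z))) / z)
      = ∮ z in C(0, 1), Complex.exp (A * z + B / z) / z := by
    refine circleIntegral.integral_congr zero_le_one fun z hz => ?_
    have hz0 : z ≠ 0 := by
      intro h; rw [Metric.mem_sphere, h] at hz; norm_num at hz
    congr 1
    rw [hA, hB]
    field_simp
    ring
  rw [hcong, circleIntegral_exp_eq]
  have hs2 : (s : ℂ) ^ 2 = (τ : ℂ) ^ 2 + (k : ℂ) ^ 2 := by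
    have h : s ^ 2 = τ ^ 2 + k ^ 2 := Real.sq_sqrt hs0
    calc (s : ℂ) ^ 2 = ((s ^ 2 : ℝ) : ℂ) := by push_cast; ring
      _ = (τ : ℂ) ^ 2 + (k : ℂ) ^ 2 := by rw [h]; push_cast; ring
  have hAB : A * B = (-1) * ((k ^ 2 * c ^ 2 / 4 : ℝ) : ℂ) := by
    have : A * B = (c : ℂ) ^ 2 * ((τ : ℂ) ^ 2 - (s : ℂ) ^ 2) / 4 := by
      rw [hA, hB]; ring
    rw [this, hs2]
    push_cast
    ring
  have h2πi : (2 * (Real.pi : ℂ) * Complex.I) ≠ 0 := by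
    simp [Real.pi_ne_zero, Complex.I_ne_zero]
  rw [← mul_assoc, one_div, inv_mul_cancel₀ h2πi, one_mul]
  refine tsum_congr fun m => ?_
  rw [hAB, mul_pow]
  ring
end

section
/- (Proposition 3.1.) Let p ∈ ℝ², ε > 0, k ≥ 0, τ > 0, t ∈ ℝ, and ω ∈ S¹ with ω^⊥ its rotation by π/2. Then ∫_{B(p,ε)} exp(x·(τω + i√(τ²+k²)·ω^⊥) − τt) dx = 2πε² · (∫₀¹ r·J₀(kεr) dr) · exp(p·(τω + i√(τ²+k²)·ω^⊥) − τt), where B(p,ε) is the open disk of radius ε centred at p and J₀(x) = Σ_{m=0}^∞ ((−1)^m/(m!)²)(x/2)^{2m} is the Bessel function of order zero. -/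
open MeasureTheory Filter Topology
open Real Set

noncomputable section

/-- The Euclidean plane ℝ². -/
abbrev E2 : Type := EuclideanSpace ℝ (Fin 2)

/-- Rotation of a vector of ℝ² by π/2. -/
def perp (ω : E2) : E2 := (EuclideanSpace.equiv (Fin 2) ℝ).symm ![-(ω 1), ω 0]

/-- Euclidean dot product on ℝ². -/
def dotR (x y : E2) : ℝ := inner ℝ x y

/-- Support function `h_D(ω) = sup_{x ∈ D} x·ω`. -/
def suppFn (D : Set E2) (ω : E2) : ℝ := sSup ((fun x => dotR x ω) '' D)

/-- Complex plane wave `v(x) = exp(x·(τω + i√(τ²+k²) ω^⊥) − τt)`. -/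
def pw (k : ℝ) (ω : E2) (τ t : ℝ) (x : E2) : ℂ :=
  Complex.exp (↑(τ * dotR x ω - τ * t) +
    Complex.I * ↑(Real.sqrt (τ ^ 2 + k ^ 2) * dotR x (perp ω)))

/-- Indicator function `I_ω(τ,t) = ∫_D ρ(x) v(x) dx`. -/
def ind (D : Set E2) (ρ : E2 → ℝ) (k : ℝ) (ω : E2) (τ t : ℝ) : ℂ :=
  ∫ x in D, (ρ x : ℂ) * pw k ω τ t x

/-- The Bessel function of order zero, `J₀(x) = Σ_{m=0}^∞ ((−1)^m/(m!)²)(x/2)^{2m}`. -/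
def besselJ0 (x : ℝ) : ℝ :=
  ∑' m : ℕ, (-1) ^ m / ((m.factorial : ℝ)) ^ 2 * (x / 2) ^ (2 * m)

lemma intE (m : ℤ) : ∫ θ in (-π : ℝ)..π, Complex.exp (m * θ * Complex.I)
    = if m = 0 then (2 * π : ℂ) else 0 := by
  split_ifs with h
  · simp [h, Complex.ofReal_neg, two_mul]
  · have hc : (m : ℂ) * Complex.I ≠ 0 := by
      simp [Complex.I_ne_zero, Complex.ext_iff]
      exact_mod_cast h
    have key := integral_exp_mul_complex (a := -π) (b := π) hc
    simp_rw [show ∀ θ : ℝ, (m : ℂ) * θ * Complex.I = (m : ℂ) * Complex.I * θ by intro θ; ring]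
    rw [key]
    have h2 : Complex.exp ((m : ℂ) * Complex.I * π) = Complex.exp ((m : ℂ) * Complex.I * (-π : ℝ)) := by
      rw [show ((m : ℂ) * Complex.I * π) = (m : ℂ) * Complex.I * (-π : ℝ) + m * (2 * π * Complex.I) by
        push_cast; ring]
      rw [Complex.exp_add, Complex.exp_int_mul_two_pi_mul_I, mul_one]
    rw [h2, sub_self, zero_div]

lemma powInt (α β : ℂ) (n : ℕ) :
    ∫ θ in (-π:ℝ)..π, (α * Complex.exp (θ * Complex.I) + β * Complex.exp (-(θ * Complex.I)))^n
    = if n % 2 = 0 then ((n.choose (n/2) : ℂ)) * (α*β)^(n/2) * (2*π) else 0 := by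
  have expand : ∀ θ : ℝ, (α * Complex.exp (θ * Complex.I) + β * Complex.exp (-(θ * Complex.I)))^n
      = ∑ j ∈ Finset.range (n+1), (α^j * β^(n-j) * (n.choose j) : ℂ)
          * Complex.exp (((2*(j:ℤ) - n) : ℤ) * θ * Complex.I) := by
    intro θ
    rw [add_pow]
    refine Finset.sum_congr rfl fun j hj => ?_
    rw [Finset.mem_range] at hj
    have hjn : j ≤ n := Nat.lt_succ_iff.mp hj
    rw [mul_pow, mul_pow, ← Complex.exp_nat_mul, ← Complex.exp_nat_mul]
    rw [show α ^ j * Complex.exp (j * (θ * Complex.I)) * (β ^ (n - j) *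
        Complex.exp ((n - j : ℕ) * -(θ * Complex.I))) * (n.choose j : ℂ)
        = (α^j * β^(n-j) * (n.choose j)) * (Complex.exp (j * (θ * Complex.I))
          * Complex.exp ((n - j : ℕ) * -(θ * Complex.I))) by ring]
    rw [← Complex.exp_add]
    congr 2
    push_cast [Nat.cast_sub hjn]
    ring
  simp_rw [expand]
  rw [intervalIntegral.integral_finset_sum]
  swap
  · intro j _
    exact (Continuous.intervalIntegrable (by fun_prop) _ _)
  simp_rw [intervalIntegral.integral_const_mul, intE]
  rcases Nat.even_or_odd n with he | ho
  · obtain ⟨m, hm⟩ := he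
    subst hm
    have h2 : (m + m) % 2 = 0 := by omega
    have h3 : (m + m) / 2 = m := by omega
    rw [if_pos h2, h3]
    rw [Finset.sum_eq_single_of_mem m (by simp [Finset.mem_range])]
    · have : (2 * (m:ℤ) - (m + m : ℕ)) = 0 := by push_cast; ring
      rw [if_pos this]
      have h4 : m + m - m = m := by omega
      rw [h4, mul_pow]
      ring
    · intro j _ hj
      have : ¬ (2 * (j:ℤ) - (m + m : ℕ) = 0) := by
        intro h; apply hj; push_cast at h; omega
      rw [if_neg this, mul_zero]
  · obtain ⟨m, hm⟩ := ho
    subst hm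
    have h2 : ¬ ((2*m + 1) % 2 = 0) := by omega
    rw [if_neg h2]
    apply Finset.sum_eq_zero
    intro j _
    have : ¬ (2 * (j:ℤ) - (2*m + 1 : ℕ) = 0) := by intro h; push_cast at h; omega
    rw [if_neg this, mul_zero]

lemma summable_aux (w : ℂ) : Summable (fun m : ℕ => w^m / ((m.factorial : ℂ))^2) := by
  refine Summable.of_norm_bounded (Real.summable_pow_div_factorial ‖w‖) fun m => ?_
  rw [norm_div, norm_pow, norm_pow, Complex.norm_natCast]
  have h1 : (1:ℝ) ≤ (m.factorial : ℝ) := by exact_mod_cast m.factorial_pos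
  refine div_le_div_of_nonneg_left (by positivity) (by positivity) ?_
  nlinarith

set_option maxHeartbeats 1000000 in
lemma circleInt (u v : ℂ) :
    ∫ θ in (-π:ℝ)..π, Complex.exp (u * Real.cos θ + v * Real.sin θ)
    = (2*π) * ∑' m : ℕ, ((u^2+v^2)/4)^m / ((m.factorial : ℂ))^2 := by
  set α : ℂ := (u - Complex.I*v)/2 with hα
  set β : ℂ := (u + Complex.I*v)/2 with hβ
  have hαβ : α * β = (u^2+v^2)/4 := by
    rw [hα, hβ]
    field_simp
    ring_nf
    rw [Complex.I_sq]
    ring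
  have key : ∀ θ : ℝ, u * Real.cos θ + v * Real.sin θ
      = α * Complex.exp (θ * Complex.I) + β * Complex.exp (-(θ * Complex.I)) := by
    intro θ
    rw [show -((θ:ℂ) * Complex.I) = ((-θ : ℝ) : ℂ) * Complex.I by push_cast; ring]
    rw [Complex.exp_mul_I, Complex.exp_mul_I]
    rw [← Complex.ofReal_cos, ← Complex.ofReal_sin, ← Complex.ofReal_cos, ← Complex.ofReal_sin]
    rw [Real.cos_neg, Real.sin_neg, hα, hβ]
    push_cast
    field_simp
    ring_nf
    rw [Complex.I_sq]
    ring
  simp_rw [key]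
  have expS : ∀ z : ℂ, Complex.exp z = ∑' n : ℕ, z^n / n.factorial := by
    intro z
    rw [Complex.exp_eq_exp_ℂ, NormedSpace.exp_eq_tsum_div]
  set F : ℕ → ℝ → ℂ := fun n θ =>
    (α * Complex.exp (θ * Complex.I) + β * Complex.exp (-(θ * Complex.I)))^n / n.factorial with hF
  have hle : (-π : ℝ) ≤ π := by linarith [pi_pos]
  have hcont : ∀ n, Continuous (F n) := by intro n; fun_prop
  have hbound : ∀ n θ, ‖F n θ‖ ≤ (‖α‖ + ‖β‖)^n / n.factorial := by
    intro n θ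
    rw [hF]
    simp only [norm_div, norm_pow, Complex.norm_natCast]
    gcongr
    calc ‖α * Complex.exp (θ * Complex.I) + β * Complex.exp (-(θ * Complex.I))‖
        ≤ ‖α * Complex.exp (θ * Complex.I)‖ + ‖β * Complex.exp (-(θ * Complex.I))‖ :=
          norm_add_le _ _
      _ = ‖α‖ + ‖β‖ := by
          rw [norm_mul, norm_mul,
            show -((θ:ℂ) * Complex.I) = ((-θ : ℝ) : ℂ) * Complex.I by push_cast; ring]
          rw [Complex.norm_exp_ofReal_mul_I, Complex.norm_exp_ofReal_mul_I]
          ring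
  set μ := volume.restrict (Ioc (-π : ℝ) π) with hμ
  have hInt : ∀ n, Integrable (F n) μ := fun n => (hcont n).integrableOn_Ioc
  have hSumInt : Summable fun n => ∫ θ, ‖F n θ‖ ∂μ := by
    refine Summable.of_nonneg_of_le (fun n => integral_nonneg fun θ => norm_nonneg _)
      (fun n => ?_) (((Real.summable_pow_div_factorial (‖α‖ + ‖β‖))).mul_left (2*π))
    calc ∫ θ, ‖F n θ‖ ∂μ ≤ ∫ _, (‖α‖ + ‖β‖)^n / n.factorial ∂μ := by
          refine integral_mono ((hInt n).norm) ?_ (fun θ => hbound n θ)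
          exact integrable_const _
      _ = 2*π * ((‖α‖ + ‖β‖)^n / n.factorial) := by
          rw [integral_const, hμ, measureReal_def, Measure.restrict_apply_univ, Real.volume_Ioc, smul_eq_mul]
          rw [ENNReal.toReal_ofReal (by linarith [pi_pos])]
          ring_nf
  have hHS := MeasureTheory.hasSum_integral_of_summable_integral_norm hInt hSumInt
  have hIeq : ∫ θ in (-π:ℝ)..π, Complex.exp (α * Complex.exp (θ * Complex.I)
      + β * Complex.exp (-(θ * Complex.I))) = ∫ θ, (∑' n, F n θ) ∂μ := by
    rw [intervalIntegral.integral_of_le hle]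
    exact setIntegral_congr_fun measurableSet_Ioc fun θ _ => expS _
  have hterm : ∀ n, (∫ θ, F n θ ∂μ)
      = (if n % 2 = 0 then ((n.choose (n/2) : ℂ)) * (α*β)^(n/2) * (2*π) else 0) / n.factorial := by
    intro n
    have h0 : (∫ θ, F n θ ∂μ) = (∫ θ in (-π:ℝ)..π,
        (α * Complex.exp (θ * Complex.I) + β * Complex.exp (-(θ * Complex.I)))^n) / n.factorial := by
      rw [intervalIntegral.integral_of_le hle, ← integral_div]
    rw [h0, powInt]
  have heven : HasSum (fun m : ℕ => ∫ θ, F (2*m) θ ∂μ)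
      ((2*π) * ∑' m : ℕ, ((u^2+v^2)/4)^m / ((m.factorial : ℂ))^2) := by
    have hS := ((summable_aux ((u^2+v^2)/4)).hasSum).mul_left (2*π : ℂ)
    convert hS using 2 with m
    · rfl
    rw [hterm]
    have h2 : (2*m) % 2 = 0 := by omega
    have h3 : (2*m) / 2 = m := by omega
    rw [if_pos h2, h3, hαβ]
    set w : ℂ := ((u^2+v^2)/4)^m with hw
    have hc : (((2*m).choose m : ℂ)) * ((m.factorial : ℂ))^2 = ((2*m).factorial : ℂ) := by
      have hnat := Nat.choose_mul_factorial_mul_factorial (show m ≤ 2*m by omega)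
      have h4 : 2*m - m = m := by omega
      rw [h4] at hnat
      have : (2*m).choose m * m.factorial * m.factorial = (2*m).factorial := hnat
      exact_mod_cast by push_cast [← this]; ring
    have hfac : ((2*m).factorial : ℂ) ≠ 0 := by exact_mod_cast (2*m).factorial_ne_zero
    have hfacm : ((m.factorial : ℂ)) ≠ 0 := by exact_mod_cast m.factorial_ne_zero
    field_simp
    linear_combination w * hc
  have hodd : HasSum (fun m : ℕ => ∫ θ, F (2*m+1) θ ∂μ) 0 := by
    have hz : ∀ m : ℕ, (∫ θ, F (2*m+1) θ ∂μ) = 0 := by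
      intro m
      rw [hterm]
      have : ¬ ((2*m+1) % 2 = 0) := by omega
      rw [if_neg this, zero_div]
    simpa [hz] using (hasSum_zero : HasSum (fun _ : ℕ => (0:ℂ)) 0)
  rw [hIeq]
  have hcomb := HasSum.even_add_odd (f := fun n => ∫ θ, F n θ ∂μ) heven hodd
  rw [add_zero] at hcomb
  exact hHS.unique hcomb

lemma tsum_eq_bessel (k r : ℝ) (u v : ℂ) (huv : u^2 + v^2 = -((k:ℂ)*r)^2) :
    ∑' m : ℕ, ((u^2+v^2)/4)^m / ((m.factorial : ℂ))^2 = ((besselJ0 (k*r) : ℝ) : ℂ) := by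
  rw [besselJ0, Complex.ofReal_tsum]
  refine tsum_congr fun m => ?_
  push_cast
  rw [huv]
  rw [show (-((k:ℂ)*r)^2/4) = (-1) * (((k:ℂ)*r/2))^2 by ring]
  rw [mul_pow, ← pow_mul]
  rw [show ((k:ℂ)*r/2) = ((k*r : ℝ) : ℂ)/2 by push_cast; ring]
  ring

lemma diskInt (A B : ℂ) (k ε : ℝ) (hk : 0 ≤ k) (hε : 0 < ε) (hAB : A^2 + B^2 = -(k:ℂ)^2) :
    ∫ z in Metric.ball (0:ℂ) ε, Complex.exp (A * z.re + B * z.im)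
    = 2*π*ε^2 * ((∫ r in (0:ℝ)..1, r * besselJ0 (k*ε*r) : ℝ) : ℂ) := by
  set f : ℂ → ℂ := (Metric.ball (0:ℂ) ε).indicator
      (fun z => Complex.exp (A * z.re + B * z.im)) with hf
  have h1 : ∫ z in Metric.ball (0:ℂ) ε, Complex.exp (A * z.re + B * z.im) = ∫ z, f z := by
    rw [hf, integral_indicator measurableSet_ball]
  set h : ℝ × ℝ → ℂ := fun p =>
    (p.1 : ℂ) * Complex.exp ((A * p.1) * Real.cos p.2 + (B * p.1) * Real.sin p.2) with hh
  have h2 : ∫ z, f z = ∫ p in polarCoord.target,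
      (Ioo (0:ℝ) ε ×ˢ Ioo (-π) π).indicator h p := by
    rw [← Complex.integral_comp_polarCoord_symm f]
    refine setIntegral_congr_fun polarCoord.open_target.measurableSet fun p hp => ?_
    rw [polarCoord_target] at hp
    obtain ⟨hp1, hp2⟩ := hp
    simp only [mem_Ioi] at hp1
    by_cases hlt : p.1 < ε
    · have hmem : p ∈ Ioo (0:ℝ) ε ×ˢ Ioo (-π) π := ⟨⟨hp1, hlt⟩, hp2⟩
      rw [indicator_of_mem hmem, hh]
      have hball : Complex.polarCoord.symm p ∈ Metric.ball (0:ℂ) ε := by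
        rw [Metric.mem_ball, dist_zero_right, Complex.norm_polarCoord_symm,
          abs_of_pos hp1]
        exact hlt
      rw [hf, indicator_of_mem hball]
      have hre : (Complex.polarCoord.symm p).re = p.1 * Real.cos p.2 := by
        rw [Complex.polarCoord_symm_apply]; simp [Complex.cos_ofReal_re, Complex.sin_ofReal_re]
      have him : (Complex.polarCoord.symm p).im = p.1 * Real.sin p.2 := by
        rw [Complex.polarCoord_symm_apply]; simp [Complex.cos_ofReal_re, Complex.sin_ofReal_re]
      rw [hre, him, Complex.real_smul]
      push_cast
      ring_nf
    · have hmem : p ∉ Ioo (0:ℝ) ε ×ˢ Ioo (-π) π := by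
        intro hmem; exact hlt hmem.1.2
      rw [indicator_of_notMem hmem]
      have hball : Complex.polarCoord.symm p ∉ Metric.ball (0:ℂ) ε := by
        rw [Metric.mem_ball, dist_zero_right, Complex.norm_polarCoord_symm,
          abs_of_pos hp1]
        exact hlt
      rw [hf, indicator_of_notMem hball, smul_zero]
  rw [h1, h2, polarCoord_target]
  have hsub : (Ioo (0:ℝ) ε ×ˢ Ioo (-π) π) ⊆ (Ioi (0:ℝ) ×ˢ Ioo (-π) π) :=
    prod_mono_left Ioo_subset_Ioi_self
  rw [setIntegral_indicator (measurableSet_Ioo.prod measurableSet_Ioo),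
    inter_eq_self_of_subset_right hsub]
  have hint : IntegrableOn h (Ioo (0:ℝ) ε ×ˢ Ioo (-π) π) := by
    have hc : Continuous h := by fun_prop
    exact ((hc.continuousOn).integrableOn_compact ((isCompact_Icc (a := (0:ℝ)) (b := ε)).prod
      (isCompact_Icc (a := -π) (b := π)))).mono_set
      (prod_mono Ioo_subset_Icc_self Ioo_subset_Icc_self)
  rw [MeasureTheory.Measure.volume_eq_prod ℝ ℝ] at hint ⊢
  rw [setIntegral_prod _ hint]
  have hinner : ∀ r : ℝ, (∫ θ in Ioo (-π) π, h (r, θ))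
      = (((2*π) * (r * besselJ0 (k*r)) : ℝ) : ℂ) := by
    intro r
    have huv : (A*r)^2 + (B*r)^2 = -((k:ℂ)*r)^2 := by
      linear_combination ((r:ℝ):ℂ)^2 * hAB
    have e1 : (∫ θ in Ioo (-π) π, h (r, θ))
        = (r:ℂ) * ∫ θ in Ioo (-π) π,
            Complex.exp ((A*r) * Real.cos θ + (B*r) * Real.sin θ) := by
      rw [← integral_const_mul]
    rw [e1, ← integral_Ioc_eq_integral_Ioo,
      ← intervalIntegral.integral_of_le (by linarith [pi_pos] : (-π:ℝ) ≤ π),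
      circleInt (A*r) (B*r), tsum_eq_bessel k r _ _ huv]
    push_cast
    ring
  rw [setIntegral_congr_fun measurableSet_Ioo (fun r _ => hinner r)]
  have hOFR : (∫ x in Ioo (0:ℝ) ε, ((2*π*(x*besselJ0 (k*x)) : ℝ) : ℂ))
      = (((∫ x in Ioo (0:ℝ) ε, 2*π*(x*besselJ0 (k*x)) : ℝ)) : ℂ) := integral_ofReal
  rw [hOFR]
  rw [show (2*(π:ℂ)*(ε:ℝ)^2 * ((∫ r in (0:ℝ)..1, r * besselJ0 (k*ε*r) : ℝ) : ℂ))
      = (((2*π*ε^2 * (∫ r in (0:ℝ)..1, r * besselJ0 (k*ε*r)) : ℝ)) : ℂ) by push_cast; ring]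
  congr 1
  rw [← integral_Ioc_eq_integral_Ioo, ← intervalIntegral.integral_of_le hε.le]
  have hs2 : ∫ x in (0:ℝ)..ε, 2*π * (x * besselJ0 (k*x))
      = 2*π * ∫ x in (0:ℝ)..ε, x * besselJ0 (k*x) := intervalIntegral.integral_const_mul _ _
  rw [hs2]
  have hsub2 := intervalIntegral.smul_integral_comp_mul_left (a := (0:ℝ)) (b := 1)
    (fun x => x * besselJ0 (k*x)) ε
  simp only [mul_zero, mul_one, smul_eq_mul] at hsub2
  rw [← hsub2]
  have : ∀ x : ℝ, (ε*x) * besselJ0 (k*(ε*x)) = ε * (x * besselJ0 (k*ε*x)) := by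
    intro x; rw [show k*(ε*x) = k*ε*x by ring]; ring
  simp_rw [this, intervalIntegral.integral_const_mul]
  ring

/-- (Proposition 3.1, mean value property):
`∫_{B(p,ε)} exp(x·(τω + i√(τ²+k²) ω^⊥) − τt) dx
  = 2πε² (∫₀¹ r J₀(kεr) dr) exp(p·(τω + i√(τ²+k²) ω^⊥) − τt)`. -/
theorem ball_integral_eq
    (p : E2) (ε k τ t : ℝ) (hε : 0 < ε) (hk : 0 ≤ k) (hτ : 0 < τ)
    (ω : E2) (hω : ‖ω‖ = 1) :
    (∫ x in Metric.ball p ε, pw k ω τ t x)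
      = 2 * Real.pi * ε ^ 2 * ((∫ r in (0:ℝ)..1, r * besselJ0 (k * ε * r) : ℝ) : ℂ) *
          pw k ω τ t p := by
  set s : ℝ := Real.sqrt (τ^2 + k^2) with hsdef
  set A : ℂ := (τ:ℂ) * (ω 0 : ℝ) - Complex.I * s * (ω 1 : ℝ) with hAdef
  set B : ℂ := (τ:ℂ) * (ω 1 : ℝ) + Complex.I * s * (ω 0 : ℝ) with hBdef
  have hperp0 : perp ω 0 = -(ω 1) := rfl
  have hperp1 : perp ω 1 = ω 0 := rfl
  have hdot : ∀ x : E2, dotR x ω = x 0 * ω 0 + x 1 * ω 1 := by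
    intro x
    simp [dotR, PiLp.inner_apply, Fin.sum_univ_two, RCLike.inner_apply]
    ring
  have hdotp : ∀ x : E2, dotR x (perp ω) = -(x 0 * ω 1) + x 1 * ω 0 := by
    intro x
    simp [dotR, PiLp.inner_apply, Fin.sum_univ_two, hperp0, hperp1]
    try ring
  have hpw : ∀ x : E2, pw k ω τ t x
      = Complex.exp (-(τ*t : ℝ)) * Complex.exp (A * (x 0 : ℝ) + B * (x 1 : ℝ)) := by
    intro x
    rw [pw, ← Complex.exp_add, hdot, hdotp, hAdef, hBdef]
    congr 1
    push_cast
    ring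
  have hω2 : (ω 0)^2 + (ω 1)^2 = 1 := by
    have := hω
    rw [EuclideanSpace.norm_eq, Fin.sum_univ_two, Real.norm_eq_abs, Real.norm_eq_abs,
      sq_abs, sq_abs] at this
    nlinarith [Real.sq_sqrt (by positivity : (0:ℝ) ≤ (ω 0)^2 + (ω 1)^2), this]
  have hs2 : s^2 = τ^2 + k^2 := Real.sq_sqrt (by positivity)
  have hω2C : ((ω 0 : ℝ) : ℂ)^2 + ((ω 1 : ℝ) : ℂ)^2 = 1 := by
    rw [← Complex.ofReal_pow, ← Complex.ofReal_pow, ← Complex.ofReal_add, hω2, Complex.ofReal_one]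
  have hs2C : ((s : ℝ) : ℂ)^2 = (τ:ℂ)^2 + (k:ℂ)^2 := by exact_mod_cast hs2
  have hAB : A^2 + B^2 = -(k:ℂ)^2 := by
    rw [hAdef, hBdef]
    linear_combination ((τ:ℂ)^2 + Complex.I^2*((s:ℝ):ℂ)^2) * hω2C + Complex.I^2 * hs2C
      + ((τ:ℂ)^2+(k:ℂ)^2) * Complex.I_sq
  simp_rw [hpw]
  rw [integral_const_mul]
  -- translation
  have htrans : (∫ x in Metric.ball p ε, Complex.exp (A * (x 0 : ℝ) + B * (x 1 : ℝ)))
      = Complex.exp (A * (p 0 : ℝ) + B * (p 1 : ℝ))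
        * ∫ y in Metric.ball (0:E2) ε, Complex.exp (A * (y 0 : ℝ) + B * (y 1 : ℝ)) := by
    have hmp : MeasurePreserving (fun y : E2 => p + y) volume volume :=
      measurePreserving_add_left volume p
    have hemb : MeasurableEmbedding (fun y : E2 => p + y) :=
      (MeasurableEquiv.addLeft p).measurableEmbedding
    have hpre : (fun y : E2 => p + y) ⁻¹' Metric.ball p ε = Metric.ball (0:E2) ε := by
      ext y
      simp [Metric.mem_ball, dist_eq_norm]
    rw [← hmp.setIntegral_preimage_emb hemb, hpre, ← integral_const_mul]
    refine setIntegral_congr_fun measurableSet_ball fun y _ => ?_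
    rw [← Complex.exp_add]
    have h0 : (p + y) 0 = p 0 + y 0 := rfl
    have h1 : (p + y) 1 = p 1 + y 1 := rfl
    rw [h0, h1]
    push_cast
    ring_nf
  rw [htrans]
  -- move to ℂ
  have hmap : (∫ y in Metric.ball (0:E2) ε, Complex.exp (A * (y 0 : ℝ) + B * (y 1 : ℝ)))
      = ∫ z in Metric.ball (0:ℂ) ε, Complex.exp (A * z.re + B * z.im) := by
    have hmp := Complex.orthonormalBasisOneI.measurePreserving_repr
    have hemb : MeasurableEmbedding (Complex.orthonormalBasisOneI.repr : ℂ → E2) :=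
      Complex.orthonormalBasisOneI.repr.toHomeomorph.measurableEmbedding
    have hpre : (Complex.orthonormalBasisOneI.repr : ℂ → E2) ⁻¹' Metric.ball (0:E2) ε
        = Metric.ball (0:ℂ) ε := by
      ext z
      simp [Metric.mem_ball, dist_eq_norm]
    rw [← hmp.setIntegral_preimage_emb hemb, hpre]
    refine setIntegral_congr_fun measurableSet_ball fun z _ => ?_
    have h0 : (Complex.orthonormalBasisOneI.repr z) 0 = z.re := by
      rw [Complex.orthonormalBasisOneI_repr_apply]; rfl
    have h1 : (Complex.orthonormalBasisOneI.repr z) 1 = z.im := by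
      rw [Complex.orthonormalBasisOneI_repr_apply]; rfl
    rw [h0, h1]
  rw [hmap, diskInt A B k ε hk hε hAB]
  ring
end
end

section
/- Let p ∈ ℝ², k ≥ 0, ω ∈ S¹ with ω^⊥ its rotation by π/2, and let ε > 0 be such that ∫₀¹ r·J₀(kεr) dr ≠ 0 (which holds for all sufficiently small ε > 0). Define I_ω(τ,t) = ∫_{B(p,ε)} exp(x·(τω + i√(τ²+k²)·ω^⊥) − τt) dx. Then { t ∈ ℝ : lim_{τ→∞} I_ω(τ,t) = 0 } = (p·ω, ∞), the open half-line of t with t > p·ω. In particular, since h_{B(p,ε)}(ω) = p·ω + ε, the indicator I_ω(τ, h_{B(p,ε)}(ω)) decays exponentially as τ → ∞. -/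
open MeasureTheory Filter Topology

noncomputable section

section AuxProofs
open Real intervalIntegral

lemma integral_exp_int_I (m : ℤ) :
    (∫ θ in (-π)..π, Complex.exp (m * θ * Complex.I)) = if m = 0 then (2*π : ℂ) else 0 := by
  rcases eq_or_ne m 0 with hm | hm
  · simp [hm, Complex.ofReal_mul]
    norm_num
    push_cast
    ring
  · rw [if_neg hm]
    have hc : (m : ℂ) * Complex.I ≠ 0 := by
      simp [Complex.ext_iff, hm]
    have key := integral_exp_mul_complex (a := -π) (b := π) hc
    have h2 : Complex.exp ((m:ℂ) * Complex.I * (π:ℝ)) = Complex.exp ((m:ℂ) * Complex.I * ((-π:ℝ))) := by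
      have h3 : (m:ℂ) * Complex.I * (π:ℝ) = (m:ℂ) * Complex.I * ((-π:ℝ)) + m * (2*π*Complex.I) := by
        push_cast; ring
      rw [h3, Complex.exp_add, Complex.exp_int_mul_two_pi_mul_I, mul_one]
    calc (∫ θ in (-π)..π, Complex.exp (m * θ * Complex.I))
        = ∫ θ in (-π)..π, Complex.exp ((m * Complex.I) * θ) := by
          apply intervalIntegral.integral_congr; intro θ _; ring_nf
      _ = 0 := by rw [key, h2, sub_self, zero_div]

lemma integral_pow_term (u v : ℂ) (n : ℕ) :
    (∫ θ in (-π)..π, (u * Complex.exp (θ * Complex.I) + v * Complex.exp (-(θ * Complex.I)))^n)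
      = if n % 2 = 0 then (2*π : ℂ) * n.choose (n/2) * (u*v)^(n/2) else 0 := by
  have expand : ∀ θ : ℝ,
      (u * Complex.exp (θ * Complex.I) + v * Complex.exp (-(θ * Complex.I)))^n
      = ∑ j ∈ Finset.range (n+1), (u^j * v^(n-j) * n.choose j) *
          Complex.exp (((2*(j:ℤ) - (n:ℤ) : ℤ) : ℂ) * θ * Complex.I) := by
    intro θ
    rw [add_pow]
    apply Finset.sum_congr rfl
    intro j hj
    rw [Finset.mem_range] at hj
    have hj' : j ≤ n := Nat.lt_succ_iff.mp hj
    rw [mul_pow, mul_pow, ← Complex.exp_nat_mul, ← Complex.exp_nat_mul]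
    have hexp : Complex.exp (↑j * (↑θ * Complex.I)) * Complex.exp (↑(n - j) * -(↑θ * Complex.I))
        = Complex.exp (((2*(j:ℤ) - (n:ℤ) : ℤ) : ℂ) * θ * Complex.I) := by
      rw [← Complex.exp_add]; congr 1; push_cast [hj']; ring
    linear_combination (u^j * v^(n-j) * (n.choose j : ℂ)) * hexp
  rw [intervalIntegral.integral_congr (fun θ _ => expand θ)]
  rw [intervalIntegral.integral_finset_sum]
  · have hterm : ∀ j ∈ Finset.range (n+1),
        (∫ θ in (-π)..π, (u^j * v^(n-j) * n.choose j) *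
            Complex.exp (((2*(j:ℤ) - (n:ℤ) : ℤ) : ℂ) * θ * Complex.I))
        = (u^j * v^(n-j) * (n.choose j : ℂ)) *
            (if (2*(j:ℤ) - (n:ℤ) : ℤ) = 0 then (2*π : ℂ) else 0) := by
      intro j _
      rw [intervalIntegral.integral_const_mul, integral_exp_int_I]
    rw [Finset.sum_congr rfl hterm]
    rcases Nat.even_or_odd n with he | ho
    · obtain ⟨m, hm⟩ := he
      have hmod : n % 2 = 0 := by omega
      rw [if_pos hmod]
      rw [Finset.sum_eq_single m]
      · have h1 : (2*(m:ℤ) - (n:ℤ) : ℤ) = 0 := by omega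
        rw [if_pos h1, mul_pow]
        have h2 : n - m = m := by omega
        have h3 : n / 2 = m := by omega
        rw [h2, h3]
        ring
      · intro j hj hjm
        rw [if_neg (by omega), mul_zero]
      · intro h
        exact absurd (Finset.mem_range.mpr (by omega)) h
    · obtain ⟨m, hm⟩ := ho
      rw [if_neg (by omega)]
      apply Finset.sum_eq_zero
      intro j _
      rw [if_neg (by omega), mul_zero]
  · intro j _
    apply Continuous.intervalIntegrable
    fun_prop

lemma cexp_tsum (z : ℂ) : Complex.exp z = ∑' n : ℕ, z ^ n / n.factorial := by
  rw [Complex.exp_eq_exp_ℂ, NormedSpace.exp_eq_tsum_div]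

lemma angular_integral (a b : ℂ) :
    (∫ θ in (-π)..π, Complex.exp (a * Real.cos θ + b * Real.sin θ))
      = (2*π : ℂ) * ∑' m : ℕ, ((a^2+b^2)/4)^m / ((m.factorial : ℂ))^2 := by
  set u : ℂ := (a - b * Complex.I) / 2 with hu
  set v : ℂ := (a + b * Complex.I) / 2 with hv
  set F : ℕ → ℝ → ℂ := fun n θ =>
    (u * Complex.exp (θ * Complex.I) + v * Complex.exp (-(θ * Complex.I)))^n / n.factorial
    with hF
  have e1 : ∀ θ : ℝ, Complex.exp (θ * Complex.I)
      = (Real.cos θ : ℂ) + (Real.sin θ : ℂ) * Complex.I := by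
    intro θ; rw [Complex.exp_mul_I, ← Complex.ofReal_cos, ← Complex.ofReal_sin]
  have e2 : ∀ θ : ℝ, Complex.exp (-(θ * Complex.I))
      = (Real.cos θ : ℂ) - (Real.sin θ : ℂ) * Complex.I := by
    intro θ
    rw [show -((θ:ℂ) * Complex.I) = ((-θ : ℝ) : ℂ) * Complex.I by push_cast; ring,
      Complex.exp_mul_I, ← Complex.ofReal_cos, ← Complex.ofReal_sin]
    push_cast [Real.cos_neg, Real.sin_neg]
    ring
  have hcomb : ∀ θ : ℝ, a * Real.cos θ + b * Real.sin θ
      = u * Complex.exp (θ * Complex.I) + v * Complex.exp (-(θ * Complex.I)) := by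
    intro θ
    rw [e1, e2, hu, hv]
    linear_combination ((Real.sin θ : ℂ) * b) * Complex.I_sq
  have hbound : ∀ n : ℕ, ∀ θ : ℝ, ‖F n θ‖ ≤ (‖u‖ + ‖v‖)^n / n.factorial := by
    intro n θ
    rw [hF]
    simp only [norm_div, norm_pow, Complex.norm_natCast]
    gcongr
    calc ‖u * Complex.exp (θ * Complex.I) + v * Complex.exp (-(θ * Complex.I))‖
        ≤ ‖u * Complex.exp (θ * Complex.I)‖ + ‖v * Complex.exp (-(θ * Complex.I))‖ :=
          norm_add_le _ _
      _ ≤ ‖u‖ + ‖v‖ := by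
          rw [norm_mul, norm_mul]
          have h1 : ‖Complex.exp ((θ:ℂ) * Complex.I)‖ = 1 := by
            simpa using Complex.norm_exp_ofReal_mul_I θ
          have h2 : ‖Complex.exp (-((θ:ℂ) * Complex.I))‖ = 1 := by
            rw [show -((θ:ℂ) * Complex.I) = ((-θ : ℝ) : ℂ) * Complex.I by push_cast; ring]
            simpa using Complex.norm_exp_ofReal_mul_I (-θ)
          rw [h1, h2, mul_one, mul_one]
  have hcont : ∀ n : ℕ, Continuous (F n) := by
    intro n
    rw [hF]
    fun_prop
  have hIntOn : ∀ n : ℕ, IntegrableOn (F n) (Set.Ioc (-π) π) := by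
    intro n
    apply Measure.integrableOn_of_bounded
    · rw [Real.volume_Ioc]; exact ENNReal.ofReal_ne_top
    · exact (hcont n).aestronglyMeasurable
    · exact Filter.Eventually.of_forall fun θ => hbound n θ
  have hSumInt : Summable fun n => ∫ θ in Set.Ioc (-π) π, ‖F n θ‖ := by
    apply Summable.of_nonneg_of_le
      (fun n => integral_nonneg fun θ => norm_nonneg _)
      (fun n => ?_)
      (((Real.summable_pow_div_factorial (‖u‖ + ‖v‖)).mul_left (2*π)))
    calc (∫ θ in Set.Ioc (-π) π, ‖F n θ‖)
        ≤ ∫ _ in Set.Ioc (-π) π, (‖u‖ + ‖v‖)^n / n.factorial := by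
          apply setIntegral_mono_on (hIntOn n).norm (integrableOn_const ?_)
            measurableSet_Ioc (fun θ _ => hbound n θ)
          rw [Real.volume_Ioc]; exact ENNReal.ofReal_ne_top
      _ = (2*π) * ((‖u‖ + ‖v‖)^n / n.factorial) := by
          rw [setIntegral_const, measureReal_def, Real.volume_Ioc, smul_eq_mul,
            ENNReal.toReal_ofReal (by linarith [Real.pi_pos] : (0:ℝ) ≤ π - -π)]
          ring
  have swap : (∫ θ in (-π)..π, Complex.exp (a * Real.cos θ + b * Real.sin θ))
      = ∑' n : ℕ, ∫ θ in (-π)..π, F n θ := by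
    rw [intervalIntegral.integral_of_le (by linarith [Real.pi_pos] : -π ≤ π)]
    rw [show (fun θ : ℝ => Complex.exp (a * Real.cos θ + b * Real.sin θ)) =
      fun θ : ℝ => ∑' n : ℕ, F n θ by
        funext θ; rw [hcomb θ, cexp_tsum]]
    rw [← integral_tsum_of_summable_integral_norm hIntOn hSumInt]
    congr 1
    funext n
    rw [intervalIntegral.integral_of_le (by linarith [Real.pi_pos] : -π ≤ π)]
  rw [swap]
  have hterm : ∀ n : ℕ, (∫ θ in (-π)..π, F n θ)
      = (if n % 2 = 0 then (2*π : ℂ) * n.choose (n/2) * (u*v)^(n/2) else 0) / n.factorial := by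
    intro n
    rw [hF]
    simp only
    rw [intervalIntegral.integral_div, integral_pow_term]
  rw [tsum_congr hterm]
  have hsupp : Function.support (fun n : ℕ =>
      (if n % 2 = 0 then (2*π : ℂ) * n.choose (n/2) * (u*v)^(n/2) else 0) / n.factorial)
      ⊆ Set.range (fun m : ℕ => 2 * m) := by
    intro n hn
    rcases Nat.even_or_odd n with he | ho
    · obtain ⟨m, hm⟩ := he; exact ⟨m, by show 2*m = n; omega⟩
    · obtain ⟨m, hm⟩ := ho
      exact absurd (by simp only [if_neg (show ¬ (n % 2 = 0) by omega), zero_div]) hn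
  rw [← Function.Injective.tsum_eq (fun x y h => by omega) hsupp]
  have huv : u * v = (a^2+b^2)/4 := by
    rw [hu, hv]
    linear_combination (-(b^2)/4) * Complex.I_sq
  have hcoeff : ∀ m : ℕ, ((2*m).choose m : ℂ) / ((2*m).factorial : ℂ)
      = 1 / ((m.factorial : ℂ))^2 := by
    intro m
    have h1 : (2*m).choose m * m.factorial * m.factorial = (2*m).factorial := by
      have := Nat.choose_mul_factorial_mul_factorial (show m ≤ 2*m by omega)
      simpa [show 2*m - m = m by omega] using this
    have h2 : ((2*m).factorial : ℂ) ≠ 0 := Nat.cast_ne_zero.mpr (Nat.factorial_ne_zero _)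
    have h3 : ((m.factorial : ℂ)) ≠ 0 := Nat.cast_ne_zero.mpr (Nat.factorial_ne_zero _)
    field_simp
    rw [← h1]
    push_cast
    ring
  calc (∑' m : ℕ, (if (2*m) % 2 = 0 then (2*π : ℂ) * (2*m).choose ((2*m)/2) * (u*v)^((2*m)/2) else 0)
          / ((2*m).factorial : ℂ))
      = ∑' m : ℕ, (2*π : ℂ) * (((a^2+b^2)/4)^m / ((m.factorial : ℂ))^2) := by
        apply tsum_congr
        intro m
        rw [if_pos (by omega), show (2*m)/2 = m by omega, huv]
        have hc := hcoeff m
        linear_combination (2*π : ℂ) * ((a^2+b^2)/4)^m * hc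
    _ = (2*π : ℂ) * ∑' m : ℕ, ((a^2+b^2)/4)^m / ((m.factorial : ℂ))^2 := tsum_mul_left

lemma bessel_tsum (k r : ℝ) :
    (∑' m : ℕ, (((-(k^2*r^2) : ℝ) : ℂ)/4)^m / ((m.factorial : ℂ))^2)
      = ((besselJ0 (k*r) : ℝ) : ℂ) := by
  rw [besselJ0, Complex.ofReal_tsum]
  apply tsum_congr
  intro m
  push_cast
  rw [show ((-(k^2*r^2) : ℂ))/4 = (-1) * ((k*r)/2)^2 by ring, mul_pow, pow_mul]
  ring

lemma plane_integral (k ε τ : ℝ) (hε : 0 < ε) :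
    (∫ z : ℂ in Metric.ball 0 ε,
        Complex.exp (τ * z.re + Real.sqrt (τ^2 + k^2) * z.im * Complex.I))
      = ((2*π*ε^2 * ∫ s in (0:ℝ)..1, s * besselJ0 (k*ε*s) : ℝ) : ℂ) := by
  set σ : ℝ := Real.sqrt (τ^2 + k^2) with hσ
  have hσ2 : σ^2 = τ^2 + k^2 := Real.sq_sqrt (by positivity)
  set g : ℂ → ℂ := fun z => Complex.exp (τ * z.re + σ * z.im * Complex.I) with hg
  set S : Set (ℝ × ℝ) := Set.Ioo 0 ε ×ˢ Set.Ioo (-π) π with hS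
  set G : ℝ × ℝ → ℂ := fun q =>
      q.1 • Complex.exp (((τ * q.1 * Real.cos q.2 : ℝ) : ℂ)
        + ((σ * q.1 * Real.sin q.2 : ℝ) : ℂ) * Complex.I) with hG
  have step1 : (∫ z : ℂ in Metric.ball 0 ε, g z)
      = ∫ q in polarCoord.target, q.1 • (Metric.ball (0:ℂ) ε).indicator g (Complex.polarCoord.symm q) := by
    rw [Complex.integral_comp_polarCoord_symm (fun z => (Metric.ball (0:ℂ) ε).indicator g z)]
    rw [MeasureTheory.integral_indicator Metric.isOpen_ball.measurableSet]
  have step2 : (∫ q in polarCoord.target,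
        q.1 • (Metric.ball (0:ℂ) ε).indicator g (Complex.polarCoord.symm q))
      = ∫ q in polarCoord.target, S.indicator G q := by
    apply setIntegral_congr_fun polarCoord.open_target.measurableSet
    intro q hq
    rw [polarCoord_target] at hq
    obtain ⟨hq1, hq2⟩ := hq
    have hre : (Complex.polarCoord.symm q).re = q.1 * Real.cos q.2 := by
      simp [Complex.polarCoord_symm_apply, Complex.cos_ofReal_re, Complex.sin_ofReal_re]
    have him : (Complex.polarCoord.symm q).im = q.1 * Real.sin q.2 := by
      simp [Complex.polarCoord_symm_apply, Complex.cos_ofReal_re, Complex.sin_ofReal_re,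
        Complex.cos_ofReal_im, Complex.sin_ofReal_im]
    have hnorm : ‖Complex.polarCoord.symm q‖ = q.1 := by
      rw [Complex.norm_polarCoord_symm, abs_of_pos hq1]
    show q.1 • (Metric.ball (0:ℂ) ε).indicator g (Complex.polarCoord.symm q) = S.indicator G q
    by_cases hlt : q.1 < ε
    · rw [Set.indicator_of_mem, Set.indicator_of_mem]
      · simp only [hg, hG, hre, him]
        push_cast
        ring_nf
      · exact Set.mk_mem_prod ⟨hq1, hlt⟩ hq2
      · rw [Metric.mem_ball, dist_zero_right, hnorm]; exact hlt
    · rw [Set.indicator_of_notMem, Set.indicator_of_notMem, smul_zero]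
      · intro hmem
        exact hlt hmem.1.2
      · rw [Metric.mem_ball, dist_zero_right, hnorm]; exact hlt
  have hSmeas : MeasurableSet S := (measurableSet_Ioo.prod measurableSet_Ioo)
  have hssub : S ⊆ polarCoord.target := by
    rw [hS, polarCoord_target]
    exact Set.prod_mono (fun x hx => hx.1) subset_rfl
  have step3 : (∫ q in polarCoord.target, S.indicator G q) = ∫ q in S, G q := by
    rw [MeasureTheory.setIntegral_indicator hSmeas, Set.inter_eq_right.mpr hssub]
  have hGcont : Continuous G := by
    rw [hG]; fun_prop
  have hSvol : volume S ≠ ⊤ := by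
    rw [hS, MeasureTheory.Measure.volume_eq_prod, MeasureTheory.Measure.prod_prod,
      Real.volume_Ioo, Real.volume_Ioo]
    exact ENNReal.mul_ne_top ENNReal.ofReal_ne_top ENNReal.ofReal_ne_top
  have hGint : IntegrableOn G S := by
    apply Measure.integrableOn_of_bounded hSvol hGcont.aestronglyMeasurable
      (M := ε * Real.exp (|τ| * ε))
    apply (MeasureTheory.ae_restrict_iff' hSmeas).mpr
    apply Filter.Eventually.of_forall
    intro q hq
    obtain ⟨hq1, hq2⟩ := hq
    rw [hG]
    simp only [norm_smul, Real.norm_eq_abs, Complex.norm_exp]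
    have hre : (((τ * q.1 * Real.cos q.2 : ℝ) : ℂ)
        + ((σ * q.1 * Real.sin q.2 : ℝ) : ℂ) * Complex.I).re = τ * q.1 * Real.cos q.2 := by
      simp only [Complex.add_re, Complex.ofReal_re, Complex.mul_re, Complex.ofReal_im,
        Complex.I_re, Complex.I_im]
      ring
    rw [hre]
    apply mul_le_mul
    · rw [abs_of_pos hq1.1]; exact le_of_lt hq1.2
    · apply Real.exp_le_exp.mpr
      calc τ * q.1 * Real.cos q.2 ≤ |τ * q.1 * Real.cos q.2| := le_abs_self _
        _ = |τ| * |q.1| * |Real.cos q.2| := by rw [abs_mul, abs_mul]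
        _ ≤ |τ| * ε * 1 := by
            apply mul_le_mul
            · apply mul_le_mul le_rfl _ (abs_nonneg _) (abs_nonneg _)
              rw [abs_of_pos hq1.1]; exact le_of_lt hq1.2
            · exact Real.abs_cos_le_one _
            · exact abs_nonneg _
            · positivity
        _ = |τ| * ε := mul_one _
    · positivity
    · positivity
  have hple : -π ≤ π := by linarith [Real.pi_pos]
  have step4 : (∫ q in S, G q)
      = ∫ r in Set.Ioo (0:ℝ) ε, ∫ θ in Set.Ioo (-π) π, G (r, θ) := by
    rw [hS] at hGint ⊢
    rw [MeasureTheory.Measure.volume_eq_prod] at hGint ⊢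
    exact MeasureTheory.setIntegral_prod G hGint
  have inner_eq : ∀ r ∈ Set.Ioo (0:ℝ) ε,
      (∫ θ in Set.Ioo (-π) π, G (r, θ))
      = ((2*π * r * besselJ0 (k * r) : ℝ) : ℂ) := by
    intro r hr
    have : (∫ θ in Set.Ioo (-π) π, G (r, θ))
        = r • ∫ θ in Set.Ioo (-π) π, Complex.exp (((τ * r : ℝ) : ℂ) * Real.cos θ
            + (((σ * r : ℝ) : ℂ) * Complex.I) * Real.sin θ) := by
      rw [← MeasureTheory.integral_smul]
      apply setIntegral_congr_fun measurableSet_Ioo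
      intro θ _
      rw [hG]
      show r • Complex.exp _ = r • Complex.exp _
      congr 1
      push_cast
      ring
    rw [this, ← MeasureTheory.integral_Ioc_eq_integral_Ioo,
      ← intervalIntegral.integral_of_le hple, angular_integral]
    have hab : (((τ * r : ℝ) : ℂ))^2 + (((σ * r : ℝ) : ℂ) * Complex.I)^2
        = ((-(k^2*r^2) : ℝ) : ℂ) := by
      have hs : ((σ:ℂ))^2 = (τ:ℂ)^2 + (k:ℂ)^2 := by exact_mod_cast congrArg (fun x : ℝ => (x:ℂ)) hσ2
      push_cast
      linear_combination ((r:ℂ)^2 * Complex.I^2) * hs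
        + ((τ:ℂ)^2 + (k:ℂ)^2) * (r:ℂ)^2 * Complex.I_sq
    rw [hab, bessel_tsum k r, Complex.real_smul]
    push_cast
    ring
  have step5 : (∫ r in Set.Ioo (0:ℝ) ε, ∫ θ in Set.Ioo (-π) π, G (r, θ))
      = ((∫ r in Set.Ioo (0:ℝ) ε, 2*π * r * besselJ0 (k * r) : ℝ) : ℂ) := by
    rw [setIntegral_congr_fun measurableSet_Ioo inner_eq]
    exact integral_ofReal
  have step6 : (∫ r in Set.Ioo (0:ℝ) ε, 2*π * r * besselJ0 (k * r))
      = 2*π*ε^2 * ∫ s in (0:ℝ)..1, s * besselJ0 (k*ε*s) := by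
    rw [← MeasureTheory.integral_Ioc_eq_integral_Ioo,
      ← intervalIntegral.integral_of_le (le_of_lt hε)]
    have hsub := intervalIntegral.integral_comp_mul_right
      (a := 0) (b := 1) (fun r => 2*π*r*besselJ0 (k*r)) (ne_of_gt hε)
    simp only [zero_mul, one_mul] at hsub
    have h2 : (∫ r in (0:ℝ)..ε, 2*π*r*besselJ0 (k*r))
        = ε • ∫ s in (0:ℝ)..1, 2*π*(s*ε)*besselJ0 (k*(s*ε)) := by
      rw [hsub, smul_smul, mul_inv_cancel₀ (ne_of_gt hε), one_smul]
    rw [h2]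
    have h3 : (∫ s in (0:ℝ)..1, 2*π*(s*ε)*besselJ0 (k*(s*ε)))
        = (2*π*ε) * ∫ s in (0:ℝ)..1, s * besselJ0 (k*ε*s) := by
      rw [← intervalIntegral.integral_const_mul]
      apply intervalIntegral.integral_congr
      intro s _
      show 2*π*(s*ε)*besselJ0 (k*(s*ε)) = 2*π*ε * (s * besselJ0 (k*ε*s))
      rw [show k*(s*ε) = k*ε*s by ring]
      ring
    rw [h3, smul_eq_mul]
    ring
  rw [step1, step2, step3, step4, step5, step6]

lemma perp_apply_0 (ω : E2) : perp ω 0 = -(ω 1) := rfl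
lemma perp_apply_1 (ω : E2) : perp ω 1 = ω 0 := rfl

lemma inner_E2 (x y : E2) : (inner ℝ x y : ℝ) = x 0 * y 0 + x 1 * y 1 := by
  rw [PiLp.inner_apply, Fin.sum_univ_two]
  simp [RCLike.inner_apply, mul_comm]

lemma norm_sq_E2 (x : E2) : ‖x‖^2 = x 0 ^ 2 + x 1 ^ 2 := by
  rw [← real_inner_self_eq_norm_sq, inner_E2]
  ring

lemma sum_sq_of_norm_one (ω : E2) (hω : ‖ω‖ = 1) : ω 0 ^ 2 + ω 1 ^ 2 = 1 := by
  rw [← norm_sq_E2, hω]; norm_num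

lemma inner_perp_self (ω : E2) : (inner ℝ (perp ω) ω : ℝ) = 0 := by
  rw [inner_E2, perp_apply_0, perp_apply_1]; ring

lemma norm_perp (ω : E2) (hω : ‖ω‖ = 1) : ‖perp ω‖ = 1 := by
  have h : ‖perp ω‖^2 = 1 := by
    rw [norm_sq_E2, perp_apply_0, perp_apply_1]
    have := sum_sq_of_norm_one ω hω
    ring_nf
    linarith
  nlinarith [norm_nonneg (perp ω)]

def onb (ω : E2) (hω : ‖ω‖ = 1) : OrthonormalBasis (Fin 2) ℝ E2 := by
  have horth : Orthonormal ℝ ![ω, perp ω] := by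
    rw [orthonormal_iff_ite]
    intro i j
    fin_cases i <;> fin_cases j <;>
      simp [inner_E2, perp_apply_0, perp_apply_1] <;>
      [skip; ring_nf; ring_nf; skip]
    · exact Or.inl hω
    · exact Or.inl (norm_perp ω hω)
  have hli := horth.linearIndependent
  have hcard : Fintype.card (Fin 2) = Module.finrank ℝ E2 := by
    simp [finrank_euclideanSpace_fin]
  exact (basisOfLinearIndependentOfCardEqFinrank hli hcard).toOrthonormalBasis
    (by rwa [coe_basisOfLinearIndependentOfCardEqFinrank])

lemma onb_0 (ω : E2) (hω : ‖ω‖ = 1) : onb ω hω 0 = ω := by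
  rw [onb]
  simp [Module.Basis.coe_toOrthonormalBasis, coe_basisOfLinearIndependentOfCardEqFinrank]

lemma onb_1 (ω : E2) (hω : ‖ω‖ = 1) : onb ω hω 1 = perp ω := by
  rw [onb]
  simp [Module.Basis.coe_toOrthonormalBasis, coe_basisOfLinearIndependentOfCardEqFinrank]

lemma ind_eq (p : E2) (k ε : ℝ) (hε : 0 < ε) (ω : E2) (hω : ‖ω‖ = 1) (τ t : ℝ) :
    ind (Metric.ball p ε) (fun _ => 1) k ω τ t
      = ((2*Real.pi*ε^2 * ∫ s in (0:ℝ)..1, s * besselJ0 (k*ε*s) : ℝ) : ℂ) * pw k ω τ t p := by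
  set σ : ℝ := Real.sqrt (τ^2 + k^2) with hσ
  set T := Complex.isometryOfOrthonormal (onb ω hω) with hTdef
  have hT : ∀ z : ℂ, T z = z.re • ω + z.im • perp ω := by
    intro z
    rw [hTdef, Complex.isometryOfOrthonormal_apply, onb_0, onb_1]
  have hωω : (inner ℝ ω ω : ℝ) = 1 := by
    rw [real_inner_self_eq_norm_sq, hω]; norm_num
  have hpω : (inner ℝ (perp ω) ω : ℝ) = 0 := inner_perp_self ω
  have hωp : (inner ℝ ω (perp ω) : ℝ) = 0 := by rw [real_inner_comm]; exact hpω
  have hpp : (inner ℝ (perp ω) (perp ω) : ℝ) = 1 := by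
    rw [real_inner_self_eq_norm_sq, norm_perp ω hω]; norm_num
  have hdot1 : ∀ z : ℂ, dotR (p + T z) ω = dotR p ω + z.re := by
    intro z
    rw [dotR, hT, inner_add_left, inner_add_left, real_inner_smul_left,
      real_inner_smul_left, hωω, hpω, dotR]
    ring
  have hdot2 : ∀ z : ℂ, dotR (p + T z) (perp ω) = dotR p (perp ω) + z.im := by
    intro z
    rw [dotR, hT, inner_add_left, inner_add_left, real_inner_smul_left,
      real_inner_smul_left, hωp, hpp, dotR]
    ring
  have hpw : ∀ z : ℂ, pw k ω τ t (p + T z)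
      = pw k ω τ t p * Complex.exp (τ * z.re + σ * z.im * Complex.I) := by
    intro z
    rw [pw, pw, hdot1, hdot2, ← Complex.exp_add, ← hσ]
    congr 1
    push_cast
    ring
  have hmem : ∀ z : ℂ, (p + T z ∈ Metric.ball p ε) ↔ z ∈ Metric.ball (0:ℂ) ε := by
    intro z
    rw [Metric.mem_ball, Metric.mem_ball, dist_eq_norm, dist_eq_norm, add_sub_cancel_left,
      sub_zero, T.norm_map]
  have hmp : MeasurePreserving T volume volume := T.measurePreserving
  have hemb : MeasurableEmbedding T := T.toHomeomorph.measurableEmbedding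
  calc ind (Metric.ball p ε) (fun _ => 1) k ω τ t
      = ∫ x in Metric.ball p ε, pw k ω τ t x := by
        rw [ind]; simp only [Complex.ofReal_one, one_mul]
    _ = ∫ x : E2, (Metric.ball p ε).indicator (pw k ω τ t) x :=
        (MeasureTheory.integral_indicator Metric.isOpen_ball.measurableSet).symm
    _ = ∫ y : E2, (Metric.ball p ε).indicator (pw k ω τ t) (p + y) :=
        (MeasureTheory.integral_add_left_eq_self _ p).symm
    _ = ∫ z : ℂ, (Metric.ball p ε).indicator (pw k ω τ t) (p + T z) :=
        (hmp.integral_comp hemb fun y => (Metric.ball p ε).indicator (pw k ω τ t) (p + y)).symm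
    _ = ∫ z : ℂ, (Metric.ball (0:ℂ) ε).indicator
          (fun z => pw k ω τ t p * Complex.exp (τ * z.re + σ * z.im * Complex.I)) z := by
        congr 1
        funext z
        by_cases hz : z ∈ Metric.ball (0:ℂ) ε
        · rw [Set.indicator_of_mem ((hmem z).mpr hz), Set.indicator_of_mem hz, hpw]
        · rw [Set.indicator_of_notMem (fun h => hz ((hmem z).mp h)),
            Set.indicator_of_notMem hz]
    _ = pw k ω τ t p * ∫ z : ℂ in Metric.ball 0 ε,
          Complex.exp (τ * z.re + σ * z.im * Complex.I) := by
        rw [MeasureTheory.integral_indicator Metric.isOpen_ball.measurableSet,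
          MeasureTheory.integral_const_mul]
    _ = ((2*Real.pi*ε^2 * ∫ s in (0:ℝ)..1, s * besselJ0 (k*ε*s) : ℝ) : ℂ) * pw k ω τ t p := by
        rw [hσ, plane_integral k ε τ hε, mul_comm]

lemma pw_norm (k : ℝ) (ω : E2) (τ t : ℝ) (x : E2) :
    ‖pw k ω τ t x‖ = Real.exp (τ * dotR x ω - τ * t) := by
  rw [pw, Complex.norm_exp]
  congr 1
  simp [Complex.add_re, Complex.ofReal_re, Complex.mul_re]

lemma suppFn_ball (p : E2) (ε : ℝ) (hε : 0 < ε) (ω : E2) (hω : ‖ω‖ = 1) :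
    suppFn (Metric.ball p ε) ω = dotR p ω + ε := by
  have hp : p ∈ Metric.ball p ε := Metric.mem_ball_self hε
  rw [suppFn]
  refine IsLUB.csSup_eq ⟨?_, ?_⟩ ⟨dotR p ω, ⟨p, hp, rfl⟩⟩
  · rintro y ⟨x, hx, rfl⟩
    have h1 : dotR x ω = dotR p ω + (inner ℝ (x - p) ω : ℝ) := by
      rw [dotR, dotR, inner_sub_left]; ring
    have h2 : (inner ℝ (x - p) ω : ℝ) ≤ ‖x - p‖ * ‖ω‖ := real_inner_le_norm _ _
    have h3 : ‖x - p‖ < ε := by rwa [Metric.mem_ball, dist_eq_norm] at hx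
    simp only
    rw [h1]
    have : (inner ℝ (x - p) ω : ℝ) ≤ ε := by
      calc (inner ℝ (x - p) ω : ℝ) ≤ ‖x - p‖ * ‖ω‖ := h2
        _ = ‖x - p‖ := by rw [hω, mul_one]
        _ ≤ ε := le_of_lt h3
    linarith
  · intro b hb
    by_contra hlt
    push_neg at hlt
    have hbp : dotR p ω ≤ b := hb ⟨p, hp, rfl⟩
    set s : ℝ := (b - dotR p ω + ε) / 2 with hs
    have hs1 : 0 < s := by
      rw [hs]; linarith
    have hs2 : s < ε := by
      rw [hs]; linarith
    have hmem : p + s • ω ∈ Metric.ball p ε := by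
      rw [Metric.mem_ball, dist_eq_norm, add_sub_cancel_left, norm_smul, hω, mul_one,
        Real.norm_eq_abs, abs_of_pos hs1]
      exact hs2
    have hval : dotR (p + s • ω) ω = dotR p ω + s := by
      rw [dotR, inner_add_left, real_inner_smul_left, real_inner_self_eq_norm_sq, hω, dotR]
      norm_num
    have := hb ⟨p + s • ω, hmem, rfl⟩
    simp only at this
    rw [hval] at this
    rw [hs] at this
    linarith

end AuxProofs

/-- For a disk source `D = B(p,ε)` with density `1` and `∫₀¹ r J₀(kεr) dr ≠ 0`,
`{t | lim_{τ→∞} I_ω(τ,t) = 0} = (p·ω, ∞)`; in particular, since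
`h_{B(p,ε)}(ω) = p·ω + ε`, the indicator `I_ω(τ, h_{B(p,ε)}(ω))` decays
exponentially as `τ → ∞`. -/
theorem disk_indicator_decay_set
    (p : E2) (k ε : ℝ) (hk : 0 ≤ k) (hε : 0 < ε)
    (ω : E2) (hω : ‖ω‖ = 1)
    (hJ : (∫ r in (0:ℝ)..1, r * besselJ0 (k * ε * r)) ≠ 0) :
    {t : ℝ | Tendsto (fun τ : ℝ => ind (Metric.ball p ε) (fun _ => 1) k ω τ t)
        atTop (𝓝 0)} = Set.Ioi (dotR p ω) ∧
    suppFn (Metric.ball p ε) ω = dotR p ω + ε ∧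
    ∃ C > (0:ℝ), ∀ τ : ℝ, 0 < τ →
      ‖ind (Metric.ball p ε) (fun _ => 1) k ω τ (suppFn (Metric.ball p ε) ω)‖
        ≤ C * Real.exp (-(τ * ε)) := by
  set c : ℝ := ∫ s in (0:ℝ)..1, s * besselJ0 (k*ε*s) with hc
  have hc0 : c ≠ 0 := hJ
  set C : ℝ := 2*Real.pi*ε^2 * c with hC
  have hC0 : C ≠ 0 := by
    rw [hC]
    have : (0:ℝ) < 2*Real.pi*ε^2 := by positivity
    exact mul_ne_zero (ne_of_gt this) hc0
  have habs : 0 < |C| := abs_pos.mpr hC0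
  have hnorm : ∀ τ t : ℝ, ‖ind (Metric.ball p ε) (fun _ => 1) k ω τ t‖
      = |C| * Real.exp (τ * (dotR p ω - t)) := by
    intro τ t
    rw [ind_eq p k ε hε ω hω τ t, norm_mul, pw_norm]
    congr 1
    · rw [Complex.norm_real, Real.norm_eq_abs]
    · congr 1; ring
  refine ⟨?_, suppFn_ball p ε hε ω hω, |C|, habs, ?_⟩
  · ext t
    simp only [Set.mem_setOf_eq, Set.mem_Ioi]
    constructor
    · intro ht
      by_contra hle
      push_neg at hle
      have hnt : Tendsto (fun τ : ℝ => ‖ind (Metric.ball p ε) (fun _ => 1) k ω τ t‖)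
          atTop (𝓝 0) := ht.norm.congr' (by simp) |>.mono_right (by simp)
      have hev : ∀ᶠ τ : ℝ in atTop, |C| ≤ ‖ind (Metric.ball p ε) (fun _ => 1) k ω τ t‖ := by
        filter_upwards [eventually_ge_atTop (0:ℝ)] with τ hτ
        rw [hnorm]
        nlinarith [Real.one_le_exp (by nlinarith : 0 ≤ τ * (dotR p ω - t)), habs]
      have := ge_of_tendsto hnt hev
      linarith
    · intro ht
      rw [tendsto_zero_iff_norm_tendsto_zero]
      have heq : (fun τ : ℝ => ‖ind (Metric.ball p ε) (fun _ => 1) k ω τ t‖)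
          = fun τ : ℝ => |C| * Real.exp (τ * (dotR p ω - t)) := by
        funext τ; exact hnorm τ t
      rw [heq]
      have h1 : Tendsto (fun τ : ℝ => τ * (dotR p ω - t)) atTop atBot :=
        tendsto_id.atTop_mul_const_of_neg (by linarith)
      have h2 : Tendsto (fun τ : ℝ => Real.exp (τ * (dotR p ω - t))) atTop (𝓝 0) :=
        Real.tendsto_exp_atBot.comp h1
      simpa using h2.const_mul |C|
  · intro τ hτ
    rw [suppFn_ball p ε hε ω hω, hnorm]
    apply le_of_eq
    congr 2
    ring
end
end
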